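/- There is a left- and right-Noetherian commutative monoid without atoms and failing cancellation: on the set {x_i : i ∈ ℤ_{≥0}} ∪ {x_∞} with product x_i x_j = x_{min(i,j)} (where x_∞ is the identity), every nonidentity element x_i satisfies x_i = x_i x_i, so no element is a product of atoms and the monoid is not atomic. -/

import Mathlib

/-- The monoid `{x_i : i ∈ ℤ≥0} ∪ {x_∞}` of the paper is `WithTop ℕ` under `min`,
with `⊤ = x_∞` as identity. -/
abbrev MinMonoidCarrier := WithTop ℕ

/-- The product: term-wise multiplication of the binary sequences, i.e. `min`. -/
def mm (a b : MinMonoidCarrier) : MinMonoidCarrier := min a b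

/-- Left divisibility for `mm`. -/
def divL (x y : MinMonoidCarrier) : Prop := ∃ z, y = mm x z

/-- Right divisibility for `mm`. -/
def divR (x y : MinMonoidCarrier) : Prop := ∃ z, y = mm z x

/-- `a` is an atom: a nonidentity element with no proper factorization. -/
def IsAtomMin (a : MinMonoidCarrier) : Prop :=
  a ≠ ⊤ ∧ ∀ u v, a = mm u v → u = ⊤ ∨ v = ⊤

/-- Being a (possibly empty) product of atoms. -/
inductive ProdAtomsMin : MinMonoidCarrier → Prop
  | one : ProdAtomsMin ⊤
  | cons (a b : MinMonoidCarrier) : IsAtomMin a → ProdAtomsMin b → ProdAtomsMin (mm a b)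

lemma no_atoms : ∀ a : MinMonoidCarrier, ¬ IsAtomMin a := by
  rintro a ⟨ha, h⟩
  rcases h a a (by simp [mm]) with h' | h' <;> exact ha h'

/-- The set `{x_i} ∪ {x_∞}` with `x_i x_j = x_{min(i,j)}` and identity `x_∞` is a commutative
monoid, is left and right Noetherian, every nonidentity element `x` satisfies `x·x = x`
(so there are no atoms and the monoid is not atomic), and cancellation fails. -/
theorem stmt17 :
    (∀ a : MinMonoidCarrier, mm ⊤ a = a ∧ mm a ⊤ = a) ∧
    (∀ a b c : MinMonoidCarrier, mm (mm a b) c = mm a (mm b c)) ∧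
    (∀ a b : MinMonoidCarrier, mm a b = mm b a) ∧
    (¬ ∃ f : ℕ → MinMonoidCarrier,
      (∀ n, divL (f n) (f (n + 1)) ∧ f n ≠ f (n + 1)) ∧ ∃ b, ∀ n, divL (f n) b) ∧
    (¬ ∃ f : ℕ → MinMonoidCarrier,
      (∀ n, divR (f n) (f (n + 1)) ∧ f n ≠ f (n + 1)) ∧ ∃ b, ∀ n, divR (f n) b) ∧
    (∀ x : MinMonoidCarrier, x ≠ ⊤ → mm x x = x) ∧
    (∃ a b c : MinMonoidCarrier, mm a b = mm a c ∧ b ≠ c) ∧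
    (∀ x : MinMonoidCarrier, x ≠ ⊤ → ¬ ProdAtomsMin x) := by
  refine ⟨fun a => ⟨by simp [mm], by simp [mm]⟩,
    fun a b c => min_assoc a b c,
    fun a b => min_comm a b, ?_, ?_, fun x _ => min_self x,
    ⟨0, 1, 2, by simp [mm], by simp⟩, ?_⟩
  · rintro ⟨f, hf, -⟩
    have hd : ∀ n, f (n + 1) < f n := by
      intro n
      obtain ⟨⟨z, hz⟩, hne⟩ := hf n
      exact lt_of_le_of_ne (hz ▸ min_le_left _ _) (Ne.symm hne)
    exact (RelEmbedding.natGT f hd).not_wellFounded wellFounded_lt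
  · rintro ⟨f, hf, -⟩
    have hd : ∀ n, f (n + 1) < f n := by
      intro n
      obtain ⟨⟨z, hz⟩, hne⟩ := hf n
      exact lt_of_le_of_ne (hz ▸ min_le_right _ _) (Ne.symm hne)
    exact (RelEmbedding.natGT f hd).not_wellFounded wellFounded_lt
  · intro x hx hp
    induction hp with
    | one => exact hx rfl
    | cons a b ha _ _ => exact no_atoms a ha
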